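/- Suppose x ∈ (0,1/2) is nonsingular. Then p is constant on some open neighborhood of x if and only if S₊(x) = 0 or S₋(x) = 0. Moreover, if S₊(x) = 0 the constant value of p near x is (Λ/q)·|S₋(x)|², and if S₋(x) = 0 it is (Λ/q)·|S₊(x)|². -/

import Mathlib

noncomputable def e (x : ℝ) : ℂ := Complex.exp (2 * Real.pi * Complex.I * x)

noncomputable def G (a k : ℤ) (q : ℕ) : ℂ :=
  ∑ ℓ ∈ Finset.range q, e (((a * ℓ ^ 2 + k * ℓ : ℤ) : ℝ) / q)

noncomputable def invMod (a : ℤ) (q : ℕ) : ℕ := ZMod.val ((a : ZMod q)⁻¹)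

noncomputable def cc (a : ℤ) (q : ℕ) (k : ℤ) : ℂ :=
  if Odd q then e ((invMod (4 * a) q : ℝ) * (k : ℝ) ^ 2 / q)
  else if Even (k + (q : ℤ) / 2) then
    (Real.sqrt 2 : ℂ) * e ((invMod a q : ℝ) * (k : ℝ) ^ 2 / (4 * q))
  else 0

noncomputable def Iset (Λ : ℝ) (q : ℕ) (x : ℝ) : Finset ℤ :=
  Finset.Icc ⌈x * q - q / (2 * Λ)⌉ ⌊x * q + q / (2 * Λ)⌋

noncomputable def pden (N q : ℕ) (Λ : ℝ) (a : ℤ) (x : ℝ) : ℝ :=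
  (4 * Λ / q) * (‖(∑ k ∈ Iset Λ q x,
    cc a q k * (Real.sin (2 * Real.pi * N * Λ * (x - k / q)) : ℂ))‖) ^ 2

noncomputable def Splus (N q : ℕ) (Λ : ℝ) (a : ℤ) (x : ℝ) : ℂ :=
  ∑ k ∈ Iset Λ q x, cc a q k * e (N * Λ * k / q)

noncomputable def Sminus (N q : ℕ) (Λ : ℝ) (a : ℤ) (x : ℝ) : ℂ :=
  ∑ k ∈ Iset Λ q x, cc a q k * e (-(N * Λ * k / q))

def Nonsingular (Λ : ℝ) (q : ℕ) (x : ℝ) : Prop :=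
  (Odd q → ∀ n : ℤ, x * q - q / (2 * Λ) ≠ n ∧ x * q + q / (2 * Λ) ≠ n) ∧
  (Even q → ∀ n : ℤ, Even n →
    x * q - q / (2 * Λ) + q / 2 ≠ n ∧ x * q + q / (2 * Λ) + q / 2 ≠ n)

noncomputable def Dnear (x : ℝ) : ℝ := |x - round x|

/- ================= auxiliary lemmas ================= -/

lemma e_add (s t : ℝ) : e (s + t) = e s * e t := by
  unfold e; rw [← Complex.exp_add]; push_cast; ring_nf

lemma e_eq (t : ℝ) : e t = Complex.exp ((2 * Real.pi * t : ℝ) * Complex.I) := by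
  unfold e; push_cast; ring_nf

lemma abs_e (t : ℝ) : ‖e t‖ = 1 := by
  rw [e_eq]; exact Complex.norm_exp_ofReal_mul_I _

lemma e_ne_zero (t : ℝ) : e t ≠ 0 := Complex.exp_ne_zero _

lemma conj_e (t : ℝ) : (starRingEnd ℂ) (e t) = e (-t) := by
  rw [e_eq, e_eq, ← Complex.exp_conj]
  congr 1
  rw [map_mul, Complex.conj_ofReal, Complex.conj_I]
  push_cast
  ring

lemma e_cos_sin (t : ℝ) :
    e t = Real.cos (2 * Real.pi * t) + Real.sin (2 * Real.pi * t) * Complex.I := by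
  rw [e_eq, Complex.exp_mul_I]
  simp [Complex.ofReal_cos, Complex.ofReal_sin]

lemma e_re (t : ℝ) : (e t).re = Real.cos (2 * Real.pi * t) := by
  rw [e_cos_sin]
  simp only [Complex.add_re, Complex.ofReal_re, Complex.mul_re, Complex.ofReal_im,
    Complex.I_re, Complex.I_im]
  ring

lemma e_im (t : ℝ) : (e t).im = Real.sin (2 * Real.pi * t) := by
  rw [e_cos_sin]
  simp only [Complex.add_im, Complex.ofReal_im, Complex.mul_im, Complex.ofReal_re,
    Complex.I_re, Complex.I_im]
  ring

lemma sin_eq_e (t : ℝ) : (Real.sin (2 * Real.pi * t) : ℂ) = (e t - e (-t)) / (2 * Complex.I) := by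
  rw [e_cos_sin, e_cos_sin]
  have : (2:ℝ) * Real.pi * -t = -(2 * Real.pi * t) := by ring
  rw [this, Real.cos_neg, Real.sin_neg]
  push_cast
  field_simp
  ring

lemma mem_Iset {Λ : ℝ} {q : ℕ} {x : ℝ} {k : ℤ} :
    k ∈ Iset Λ q x ↔ x * q - q / (2 * Λ) ≤ k ∧ (k : ℝ) ≤ x * q + q / (2 * Λ) := by
  rw [Iset, Finset.mem_Icc, Int.ceil_le, Int.le_floor]

lemma int_gap (E : ℝ) : ∃ δ > (0:ℝ), ∀ k : ℤ, (k : ℝ) ≠ E → δ ≤ |E - k| := by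
  have hfr : Int.fract E = E - ⌊E⌋ := rfl
  by_cases h : Int.fract E = 0
  · refine ⟨1, one_pos, fun k hk => ?_⟩
    have hE : E = (⌊E⌋ : ℝ) := by rw [hfr] at h; linarith
    have hne : k ≠ ⌊E⌋ := by
      intro hkk; apply hk; rw [hkk, ← hE]
    have h2 : E - (k:ℝ) = ((⌊E⌋ - k : ℤ) : ℝ) := by push_cast; linarith
    rw [h2, ← Int.cast_abs]
    have : (1:ℤ) ≤ |⌊E⌋ - k| := Int.one_le_abs (sub_ne_zero.mpr fun hh => hne hh.symm)
    exact_mod_cast this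
  · refine ⟨min (Int.fract E) (1 - Int.fract E), ?_, fun k hk => ?_⟩
    · have h1 := Int.fract_nonneg E
      have h2 := Int.fract_lt_one E
      have : 0 < Int.fract E := lt_of_le_of_ne h1 (Ne.symm h)
      exact lt_min this (by linarith)
    · rcases le_or_gt k ⌊E⌋ with hle | hlt
      · have hkr : (k:ℝ) ≤ ⌊E⌋ := by exact_mod_cast hle
        have : Int.fract E ≤ E - k := by rw [hfr]; linarith
        calc min (Int.fract E) (1 - Int.fract E) ≤ Int.fract E := min_le_left _ _
          _ ≤ |E - k| := this.trans (le_abs_self _)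
      · have hk1 : (⌊E⌋:ℝ) + 1 ≤ k := by exact_mod_cast hlt
        have h3 : 1 - Int.fract E ≤ -(E - k) := by rw [hfr]; linarith
        calc min (Int.fract E) (1 - Int.fract E) ≤ 1 - Int.fract E := min_le_right _ _
          _ ≤ |E - k| := h3.trans (neg_le_abs _)

lemma ns_zero {Λ : ℝ} {q : ℕ} {x : ℝ} (a : ℤ) (hns : Nonsingular Λ q x) (k : ℤ)
    (hk : (k : ℝ) = x * q - q / (2 * Λ) ∨ (k : ℝ) = x * q + q / (2 * Λ)) :
    cc a q k = 0 := by
  rcases Nat.even_or_odd q with hev | hodd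
  · rw [cc, if_neg (Nat.not_odd_iff_even.mpr hev)]
    rw [if_neg]
    intro hpar
    have hthis := hns.2 hev (k + (q:ℤ)/2) hpar
    obtain ⟨m, hm⟩ := hev
    have hq2 : (((q:ℤ)/2 : ℤ) : ℝ) = (q:ℝ)/2 := by
      have h1 : (q:ℤ)/2 = (m:ℤ) := by omega
      rw [h1]; rw [hm]; push_cast; ring
    rcases hk with h | h
    · exact hthis.1 (by push_cast [hq2]; linarith)
    · exact hthis.2 (by push_cast [hq2]; linarith)
  · rcases hk with h | h
    · exact absurd h.symm (hns.1 hodd k).1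
    · exact absurd h.symm (hns.1 hodd k).2

lemma loc {Λ : ℝ} (q : ℕ) (hq : 0 < q) (a : ℤ) {x : ℝ} (hns : Nonsingular Λ q x) :
    ∃ ε > (0:ℝ), ∀ y : ℝ, |y - x| < ε → ∀ k : ℤ, cc a q k ≠ 0 →
      (k ∈ Iset Λ q y ↔ k ∈ Iset Λ q x) := by
  set L := x * q - q / (2 * Λ) with hL
  set R := x * q + q / (2 * Λ) with hR
  obtain ⟨δL, hδL, hgapL⟩ := int_gap L
  obtain ⟨δR, hδR, hgapR⟩ := int_gap R
  have hq' : (0:ℝ) < q := by exact_mod_cast hq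
  refine ⟨min δL δR / q, by positivity, fun y hy k hcc => ?_⟩
  have hyL : |(y * q - q / (2 * Λ)) - L| < min δL δR := by
    rw [hL]
    have h0 : (y * q - q / (2 * Λ)) - (x * q - q / (2 * Λ)) = (y - x) * q := by ring
    rw [h0, abs_mul, abs_of_pos hq']
    calc |y - x| * q < (min δL δR / q) * q := mul_lt_mul_of_pos_right hy hq'
      _ = min δL δR := by field_simp
  have hyR : |(y * q + q / (2 * Λ)) - R| < min δL δR := by
    rw [hR]
    have h0 : (y * q + q / (2 * Λ)) - (x * q + q / (2 * Λ)) = (y - x) * q := by ring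
    rw [h0, abs_mul, abs_of_pos hq']
    calc |y - x| * q < (min δL δR / q) * q := mul_lt_mul_of_pos_right hy hq'
      _ = min δL δR := by field_simp
  have hkL : (k:ℝ) ≠ L := fun h => hcc (ns_zero a hns k (Or.inl h))
  have hkR : (k:ℝ) ≠ R := fun h => hcc (ns_zero a hns k (Or.inr h))
  have gL := hgapL k hkL
  have gR := hgapR k hkR
  rw [mem_Iset, mem_Iset, ← hL, ← hR]
  rw [abs_sub_lt_iff] at hyL hyR
  clear_value L R
  have hmL : min δL δR ≤ δL := min_le_left _ _
  have hmR : min δL δR ≤ δR := min_le_right _ _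
  rcases le_abs.mp gL with h1 | h1 <;> rcases le_abs.mp gR with h2 | h2 <;>
    (constructor <;> rintro ⟨ha, hb⟩ <;>
      exact ⟨by linarith [hyL.1, hyL.2], by linarith [hyR.1, hyR.2]⟩)

lemma sum_loc_eq {a : ℤ} {q : ℕ} (s t : Finset ℤ)
    (h : ∀ k : ℤ, cc a q k ≠ 0 → (k ∈ s ↔ k ∈ t)) (g : ℤ → ℂ) :
    ∑ k ∈ s, cc a q k * g k = ∑ k ∈ t, cc a q k * g k := by
  have h1 : ∑ k ∈ s, cc a q k * g k = ∑ k ∈ s ∪ t, cc a q k * g k := by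
    refine Finset.sum_subset Finset.subset_union_left fun k hk hks => ?_
    rcases Finset.mem_union.mp hk with h' | h'
    · exact absurd h' hks
    · by_cases hcc : cc a q k = 0
      · rw [hcc, zero_mul]
      · exact absurd ((h k hcc).mpr h') hks
  have h2 : ∑ k ∈ t, cc a q k * g k = ∑ k ∈ s ∪ t, cc a q k * g k := by
    refine Finset.sum_subset Finset.subset_union_right fun k hk hks => ?_
    rcases Finset.mem_union.mp hk with h' | h'
    · by_cases hcc : cc a q k = 0
      · rw [hcc, zero_mul]
      · exact absurd ((h k hcc).mp h') hks
    · exact absurd h' hks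
  rw [h1, h2]

lemma sum_sin_eq (N q : ℕ) (Λ : ℝ) (a : ℤ) (T : Finset ℤ) (y : ℝ) :
    ∑ k ∈ T, cc a q k * (Real.sin (2 * Real.pi * N * Λ * (y - k / q)) : ℂ)
      = (e (N * Λ * y) * (∑ k ∈ T, cc a q k * e (-(N * Λ * k / q)))
         - e (-(N * Λ * y)) * (∑ k ∈ T, cc a q k * e (N * Λ * k / q))) / (2 * Complex.I) := by
  rw [Finset.mul_sum, Finset.mul_sum, ← Finset.sum_sub_distrib, Finset.sum_div]
  refine Finset.sum_congr rfl fun k _ => ?_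
  have harg : 2 * Real.pi * N * Λ * (y - k / q)
      = 2 * Real.pi * (N * Λ * y + -(N * Λ * k / q)) := by ring
  rw [harg, sin_eq_e, e_add, neg_add, e_add, neg_neg]
  field_simp

lemma abs2 (M P : ℂ) (u : ℝ) :
    ‖e u * M - e (-u) * P‖ ^ 2
      = Complex.normSq M + Complex.normSq P
        - 2 * (e (u + u) * (M * (starRingEnd ℂ) P)).re := by
  rw [Complex.sq_norm, Complex.normSq_sub, Complex.normSq_mul, Complex.normSq_mul]
  have h1 : Complex.normSq (e u) = 1 := by
    rw [← Complex.sq_norm, abs_e]; norm_num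
  have h2 : Complex.normSq (e (-u)) = 1 := by
    rw [← Complex.sq_norm, abs_e]; norm_num
  rw [h1, h2, one_mul, one_mul]
  congr 3
  rw [map_mul, conj_e, neg_neg, e_add]
  ring

set_option maxHeartbeats 1000000 in
theorem stmt5 (Λ : ℝ) (hΛ : 1 < Λ) (N : ℕ) (hN : 0 < N) (a : ℤ) (q : ℕ)
    (hq : 0 < q) (hcop : Int.gcd a q = 1) (x : ℝ) (hx : x ∈ Set.Ioo (0 : ℝ) (1 / 2))
    (hns : Nonsingular Λ q x) :
    ((∃ ε > (0 : ℝ), ∀ y : ℝ, |y - x| < ε → pden N q Λ a y = pden N q Λ a x) ↔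
      (Splus N q Λ a x = 0 ∨ Sminus N q Λ a x = 0)) ∧
    (Splus N q Λ a x = 0 → ∃ ε > (0 : ℝ), ∀ y : ℝ, |y - x| < ε →
      pden N q Λ a y = (Λ / q) * (‖Sminus N q Λ a x‖) ^ 2) ∧
    (Sminus N q Λ a x = 0 → ∃ ε > (0 : ℝ), ∀ y : ℝ, |y - x| < ε →
      pden N q Λ a y = (Λ / q) * (‖Splus N q Λ a x‖) ^ 2) := by
  have hq' : (0:ℝ) < q := by exact_mod_cast hq
  have hΛ0 : (0:ℝ) < Λ := by linarith
  have hN' : (0:ℝ) < N := by exact_mod_cast hN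
  obtain ⟨ε₀, hε₀, hloc⟩ := loc (Λ := Λ) q hq a hns
  -- master formula
  have master : ∀ y : ℝ, |y - x| < ε₀ →
      pden N q Λ a y = (Λ / q) * ‖
        (e (N * Λ * y) * Sminus N q Λ a x - e (-(N * Λ * y)) * Splus N q Λ a x)‖ ^ 2 := by
    intro y hy
    rw [pden]
    rw [sum_loc_eq (Iset Λ q y) (Iset Λ q x) (hloc y hy)
      (fun k => ((Real.sin (2 * Real.pi * N * Λ * (y - k / q)) : ℝ) : ℂ))]
    rw [sum_sin_eq, norm_div, div_pow]
    have h2I : ‖(2 * Complex.I)‖ = 2 := by simp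
    rw [h2I, Splus, Sminus]
    ring
  refine ⟨?_, ?_, ?_⟩
  · constructor
    · -- hard direction
      rintro ⟨ε, hε, hconst⟩
      set ε' := min ε ε₀ with hε'
      have hε'0 : 0 < ε' := lt_min hε hε₀
      set t := min (ε'/2) (1/(8 * N * Λ)) with ht
      have ht0 : 0 < t := lt_min (by linarith) (by positivity)
      have htε : t < ε' := lt_of_le_of_lt (min_le_left _ _) (by linarith)
      have htb : t ≤ 1/(8 * N * Λ) := min_le_right _ _
      -- F values
      set w := e (N * Λ * x + N * Λ * x) * (Sminus N q Λ a x * (starRingEnd ℂ) (Splus N q Λ a x)) with hw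
      have key : ∀ z : ℝ, |z - x| < ε' →
          (e (N * Λ * z + N * Λ * z) * (Sminus N q Λ a x * (starRingEnd ℂ) (Splus N q Λ a x))).re = w.re := by
        intro z hz
        have h1 := hconst z (lt_of_lt_of_le hz (min_le_left _ _))
        have hzz : |z - x| < ε₀ := lt_of_lt_of_le hz (min_le_right _ _)
        have hxx : |x - x| < ε₀ := by simpa using hε₀
        rw [master z hzz, master x hxx, abs2, abs2] at h1
        have hΛq : (Λ / q) ≠ 0 := by positivity
        have := mul_left_cancel₀ hΛq h1
        linarith
      have hxt : |x + t - x| < ε' := by rw [show x + t - x = t by ring, abs_of_pos ht0]; exact htε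
      have hxt' : |x - t - x| < ε' := by
        rw [show x - t - x = -t by ring, abs_neg, abs_of_pos ht0]; exact htε
      have k1 := key (x + t) hxt
      have k2 := key (x - t) hxt'
      -- expand
      have e1 : e (N * Λ * (x + t) + N * Λ * (x + t))
          = e (N * Λ * x + N * Λ * x) * e (2 * (N * Λ * t)) := by
        rw [← e_add]; congr 1; ring
      have e2 : e (N * Λ * (x - t) + N * Λ * (x - t))
          = e (N * Λ * x + N * Λ * x) * e (-(2 * (N * Λ * t))) := by
        rw [← e_add]; congr 1; ring
      rw [e1, mul_assoc, mul_comm (e (2 * (N * Λ * t))), ← mul_assoc, ← hw] at k1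
      rw [e2, mul_assoc, mul_comm (e (-(2 * (N * Λ * t)))), ← mul_assoc, ← hw] at k2
      set u := 2 * Real.pi * (2 * (N * Λ * t)) with hu
      have hre : (e (2 * (N * Λ * t))).re = Real.cos u := e_re _
      have him : (e (2 * (N * Λ * t))).im = Real.sin u := e_im _
      have hre' : (e (-(2 * (N * Λ * t)))).re = Real.cos u := by
        rw [e_re, show 2 * Real.pi * -(2 * (N * Λ * t)) = -u by rw [hu]; ring, Real.cos_neg]
      have him' : (e (-(2 * (N * Λ * t)))).im = - Real.sin u := by
        rw [e_im, show 2 * Real.pi * -(2 * (N * Λ * t)) = -u by rw [hu]; ring, Real.sin_neg]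
      rw [Complex.mul_re, hre, him] at k1
      rw [Complex.mul_re, hre', him'] at k2
      -- bounds on u
      have hπ := Real.pi_pos
      have hu0 : 0 < u := by rw [hu]; positivity
      have huπ : u ≤ Real.pi / 2 := by
        rw [hu]
        have : 2 * (N * Λ * t) ≤ 1/4 := by
          calc 2 * ((N:ℝ) * Λ * t) ≤ 2 * ((N:ℝ) * Λ * (1/(8 * N * Λ))) := by
                have hNL : (0:ℝ) < (N:ℝ) * Λ := by positivity
                nlinarith
            _ = 1/4 := by field_simp; ring
        nlinarith
      have hsin : 0 < Real.sin u := Real.sin_pos_of_pos_of_lt_pi hu0 (by nlinarith)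
      have hcos : Real.cos u ≠ 1 := by
        intro hc
        have := (Real.cos_eq_one_iff_of_lt_of_lt (x := u) (by nlinarith) (by nlinarith)).mp hc
        exact absurd this (by linarith)
      -- derive w = 0
      have him0 : w.im = 0 := by nlinarith [k1, k2]
      have hre0 : w.re = 0 := by
        have hsum : w.re * Real.cos u = w.re := by nlinarith [k1, k2]
        by_contra hne
        exact hcos (by field_simp at hsum ⊢; nlinarith [hsum])
      have hw0 : w = 0 := Complex.ext hre0 him0
      have hMP : Sminus N q Λ a x * (starRingEnd ℂ) (Splus N q Λ a x) = 0 := by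
        rcases mul_eq_zero.mp (hw ▸ hw0 : e (N * Λ * x + N * Λ * x) * (Sminus N q Λ a x * (starRingEnd ℂ) (Splus N q Λ a x)) = 0) with h | h
        · exact absurd h (e_ne_zero _)
        · exact h
      rcases mul_eq_zero.mp hMP with h | h
      · exact Or.inr h
      · exact Or.inl (by simpa using star_eq_zero.mp h)
    · rintro (hP0 | hM0)
      · refine ⟨ε₀, hε₀, fun y hy => ?_⟩
        have hxx : |x - x| < ε₀ := by simpa using hε₀
        rw [master y hy, master x hxx, hP0]
        simp [map_mul, abs_e]
      · refine ⟨ε₀, hε₀, fun y hy => ?_⟩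
        have hxx : |x - x| < ε₀ := by simpa using hε₀
        rw [master y hy, master x hxx, hM0]
        simp [map_mul, abs_e]
  · intro hP0
    refine ⟨ε₀, hε₀, fun y hy => ?_⟩
    rw [master y hy, hP0]
    simp [map_mul, abs_e]
  · intro hM0
    refine ⟨ε₀, hε₀, fun y hy => ?_⟩
    rw [master y hy, hM0]
    simp [map_mul, abs_e]
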